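/- Let u : [-1,1] → ℝ be C¹ with mean value M/2 over (-1,1) and ∫_{-1}^{1} (1-x²) u'(x)² dx ≤ C₀. Then for every β > 0 there is a constant C₁ (depending only on β and C₀) such that (1-x²)^{β/2} |u(x) - M/2| ≤ C₁ for all x ∈ (-1,1). -/

import Mathlib

open MeasureTheory intervalIntegral Set

/-- Log bound: for γ ∈ (0,1/2], s ∈ (0,2], |log s| ≤ γ⁻¹ s^(-γ). -/
lemma my_log_bound {γ s : ℝ} (hγ0 : 0 < γ) (hγ : γ ≤ 1/2) (hs0 : 0 < s) (hs2 : s ≤ 2) :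
    |Real.log s| ≤ γ⁻¹ * s ^ (-γ) := by
  have hsγ : (0:ℝ) < s ^ (-γ) := Real.rpow_pos_of_pos hs0 _
  rcases le_or_gt s 1 with h1 | h1
  · rw [abs_of_nonpos (Real.log_nonpos hs0.le h1)]
    have : Real.log (s ^ (-γ)) ≤ s ^ (-γ) := by
      linarith [Real.log_le_sub_one_of_pos hsγ]
    rw [Real.log_rpow hs0] at this
    have hγ' : (0:ℝ) < γ⁻¹ := by positivity
    calc -Real.log s = γ⁻¹ * (-γ * Real.log s) := by field_simp
      _ ≤ γ⁻¹ * s ^ (-γ) := by nlinarith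
  · rw [abs_of_nonneg (Real.log_nonneg h1.le)]
    have h2 : Real.log s ≤ 1 := by
      have := Real.log_le_sub_one_of_pos hs0; linarith
    have h3 : s ^ γ ≤ 2 := by
      calc s ^ γ ≤ 2 ^ γ := Real.rpow_le_rpow hs0.le hs2 hγ0.le
        _ ≤ 2 ^ (1:ℝ) := Real.rpow_le_rpow_of_exponent_le one_le_two (by linarith)
        _ = 2 := Real.rpow_one 2
    have h4 : (1:ℝ) ≤ γ⁻¹ * s ^ (-γ) := by
      rw [Real.rpow_neg hs0.le]
      have hsp : (0:ℝ) < s ^ γ := Real.rpow_pos_of_pos hs0 _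
      have : (2:ℝ) ≤ γ⁻¹ := by
        rw [le_inv_comm₀ (by norm_num) hγ0]; linarith
      calc (1:ℝ) = 2 * 2⁻¹ := by norm_num
        _ ≤ γ⁻¹ * (s ^ γ)⁻¹ := by
            apply mul_le_mul this _ (by norm_num) (by positivity)
            exact inv_anti₀ hsp h3
    linarith


noncomputable def Fat (t : ℝ) : ℝ := (Real.log (1 + t) - Real.log (1 - t)) / 2

lemma Fat_hasDerivAt {t : ℝ} (h1 : -1 < t) (h2 : t < 1) :
    HasDerivAt Fat (1 - t ^ 2)⁻¹ t := by
  have ha : (0:ℝ) < 1 + t := by linarith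
  have hb : (0:ℝ) < 1 - t := by linarith
  have d1 : HasDerivAt (fun t : ℝ => Real.log (1 + t)) (1 + t)⁻¹ t := by
    have := (Real.hasDerivAt_log ha.ne').comp t ((hasDerivAt_id t).const_add 1)
    simpa [Function.comp_def] using this
  have d2 : HasDerivAt (fun t : ℝ => Real.log (1 - t)) (-(1 - t)⁻¹) t := by
    have := (Real.hasDerivAt_log hb.ne').comp t ((hasDerivAt_id t).neg.const_add 1)
    simpa [Function.comp_def] using this
  have := ((d1.sub d2).div_const 2)
  refine this.congr_deriv ?_
  have hc : (1:ℝ) - t ^ 2 ≠ 0 := by nlinarith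
  field_simp
  ring

lemma Fat_bound {γ t : ℝ} (hγ0 : 0 < γ) (hγ : γ ≤ 1/2) (h1 : -1 < t) (h2 : t < 1) :
    |Fat t| ≤ γ⁻¹ / 2 * ((1 - t) ^ (-γ) + (1 + t) ^ (-γ)) := by
  have ha : (0:ℝ) < 1 + t := by linarith
  have hb : (0:ℝ) < 1 - t := by linarith
  have b1 := my_log_bound hγ0 hγ ha (by linarith)
  have b2 := my_log_bound hγ0 hγ hb (by linarith)
  have : |Fat t| ≤ (|Real.log (1 + t)| + |Real.log (1 - t)|) / 2 := by
    rw [Fat]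
    calc |(Real.log (1+t) - Real.log (1-t)) / 2|
        = |Real.log (1+t) - Real.log (1-t)| / 2 := by rw [abs_div]; norm_num
      _ ≤ (|Real.log (1 + t)| + |Real.log (1 - t)|) / 2 := by
          gcongr; exact abs_sub _ _
  calc |Fat t| ≤ (|Real.log (1 + t)| + |Real.log (1 - t)|) / 2 := this
    _ ≤ (γ⁻¹ * (1+t) ^ (-γ) + γ⁻¹ * (1-t) ^ (-γ)) / 2 := by gcongr
    _ = γ⁻¹ / 2 * ((1 - t) ^ (-γ) + (1 + t) ^ (-γ)) := by ring
section
variable {C₀ : ℝ} {u : ℝ → ℝ}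

lemma my_key (hu : ContDiffOn ℝ 1 u (Set.Icc (-1) 1))
    (hE : (∫ x in (-1:ℝ)..1, (1 - x^2) * (deriv u x)^2) ≤ C₀)
    {x y : ℝ} (hx : x ∈ Set.Ioo (-1:ℝ) 1) (hy : y ∈ Set.Ioo (-1:ℝ) 1) (hyx : y ≤ x) :
    |u x - u y| ≤ (max C₀ 0) / 2 + |Fat x| / 2 + |Fat y| / 2 := by
  obtain ⟨hx1, hx2⟩ := hx
  obtain ⟨hy1, hy2⟩ := hy
  have hsub : Set.Icc y x ⊆ Set.Ioo (-1:ℝ) 1 := fun t ht =>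
    ⟨lt_of_lt_of_le hy1 ht.1, lt_of_le_of_lt ht.2 hx2⟩
  have huic : Set.uIcc y x = Set.Icc y x := Set.uIcc_of_le hyx
  -- derivative facts
  set D := derivWithin u (Set.Icc (-1:ℝ) 1) with hDdef
  have hD : ContinuousOn D (Set.Icc (-1:ℝ) 1) :=
    hu.continuousOn_derivWithin (uniqueDiffOn_Icc (by norm_num)) le_rfl
  have hmemnhds : ∀ t ∈ Set.Ioo (-1:ℝ) 1, Set.Icc (-1:ℝ) 1 ∈ nhds t := fun t ht =>
    Icc_mem_nhds ht.1 ht.2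
  have hderiv_eq : ∀ t ∈ Set.Ioo (-1:ℝ) 1, deriv u t = D t := fun t ht =>
    (derivWithin_of_mem_nhds (hmemnhds t ht)).symm
  have hdiff : ∀ t ∈ Set.Ioo (-1:ℝ) 1, HasDerivAt u (deriv u t) t := by
    intro t ht
    exact ((hu.differentiableOn one_ne_zero t (Set.Ioo_subset_Icc_self ht)).differentiableAt
      (hmemnhds t ht)).hasDerivAt
  have hcont_deriv : ContinuousOn (deriv u) (Set.Ioo (-1:ℝ) 1) :=
    (hD.mono Set.Ioo_subset_Icc_self).congr (fun t ht => hderiv_eq t ht)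
  -- interval integrabilities on [y,x]
  have hint_f : IntervalIntegrable (deriv u) MeasureTheory.volume y x := by
    apply ContinuousOn.intervalIntegrable
    rw [huic]; exact hcont_deriv.mono hsub
  have hcA : ContinuousOn (fun t : ℝ => (1 - t^2) * (deriv u t)^2) (Set.Icc y x) := by
    apply ContinuousOn.mul
    · exact (continuous_const.sub (continuous_pow 2)).continuousOn
    · exact ((hcont_deriv.mono hsub).pow 2)
  have hcB : ContinuousOn (fun t : ℝ => (1 - t^2)⁻¹) (Set.Icc y x) := by
    apply ContinuousOn.inv₀ (continuous_const.sub (continuous_pow 2)).continuousOn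
    intro t ht
    have := hsub ht
    show (1:ℝ) - t^2 ≠ 0
    nlinarith [this.1, this.2]
  have hint_A : IntervalIntegrable (fun t : ℝ => (1 - t^2) * (deriv u t)^2)
      MeasureTheory.volume y x := by
    apply ContinuousOn.intervalIntegrable; rw [huic]; exact hcA
  have hint_B : IntervalIntegrable (fun t : ℝ => (1 - t^2)⁻¹) MeasureTheory.volume y x := by
    apply ContinuousOn.intervalIntegrable; rw [huic]; exact hcB
  -- FTC
  have husub : u x - u y = ∫ t in y..x, deriv u t :=
    (intervalIntegral.integral_eq_sub_of_hasDerivAt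
      (fun t ht => hdiff t (hsub (huic ▸ ht))) hint_f).symm
  -- pointwise AM-GM
  have hpt : ∀ t ∈ Set.Icc y x,
      |deriv u t| ≤ (1/2) * ((1 - t^2) * (deriv u t)^2 + (1 - t^2)⁻¹) := by
    intro t ht
    have h0 : (0:ℝ) < 1 - t^2 := by
      have := hsub ht; nlinarith [this.1, this.2]
    calc |deriv u t| ≤ ((1 - t^2)^2 * |deriv u t|^2 + 1) / (2 * (1 - t^2)) := by
          rw [le_div_iff₀ (by positivity)]
          nlinarith [sq_nonneg ((1 - t^2) * |deriv u t| - 1)]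
      _ = (1/2) * ((1 - t^2) * (deriv u t)^2 + (1 - t^2)⁻¹) := by
          rw [sq_abs]; field_simp
  -- energy bound
  have hIoo : MeasureTheory.IntegrableOn (fun t : ℝ => (1 - t^2) * (deriv u t)^2)
      (Set.Ioo (-1:ℝ) 1) MeasureTheory.volume := by
    obtain ⟨K, hK⟩ := isCompact_Icc.exists_bound_of_continuousOn hD
    refine MeasureTheory.Measure.integrableOn_of_bounded (M := K^2) measure_Ioo_lt_top.ne
      (((measurable_const.sub (measurable_id.pow_const 2)).mul
        ((measurable_deriv u).pow_const 2)).aestronglyMeasurable) ?_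
    · filter_upwards [MeasureTheory.ae_restrict_mem measurableSet_Ioo] with t ht
      have h0 : (0:ℝ) < 1 - t^2 := by nlinarith [ht.1, ht.2]
      have h1 : (1:ℝ) - t^2 ≤ 1 := by nlinarith [ht.1, ht.2]
      have h2 : |D t| ≤ K := by
        simpa using hK t (Set.Ioo_subset_Icc_self ht)
      rw [hderiv_eq t ht, Real.norm_eq_abs]
      rw [abs_of_nonneg (by positivity)]
      nlinarith [sq_abs (D t), sq_nonneg (D t), abs_nonneg (D t)]
  have hA_le : (∫ t in y..x, (1 - t^2) * (deriv u t)^2) ≤ max C₀ 0 := by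
    have hnonneg : 0 ≤ᵐ[MeasureTheory.volume.restrict (Set.Ioo (-1:ℝ) 1)]
        (fun t : ℝ => (1 - t^2) * (deriv u t)^2) := by
      filter_upwards [MeasureTheory.ae_restrict_mem measurableSet_Ioo] with t ht
      have h0 : (0:ℝ) ≤ 1 - t^2 := by nlinarith [ht.1, ht.2]
      positivity
    have hsub2 : Set.Ioc y x ⊆ Set.Ioo (-1:ℝ) 1 := fun t ht =>
      ⟨lt_trans hy1 ht.1, lt_of_le_of_lt ht.2 hx2⟩
    calc (∫ t in y..x, (1 - t^2) * (deriv u t)^2)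
        = ∫ t in Set.Ioc y x, (1 - t^2) * (deriv u t)^2 := intervalIntegral.integral_of_le hyx
      _ ≤ ∫ t in Set.Ioo (-1:ℝ) 1, (1 - t^2) * (deriv u t)^2 :=
          MeasureTheory.setIntegral_mono_set hIoo hnonneg hsub2.eventuallyLE
      _ = ∫ t in (-1:ℝ)..1, (1 - t^2) * (deriv u t)^2 := by
          rw [intervalIntegral.integral_of_le (by norm_num : (-1:ℝ) ≤ 1),
            MeasureTheory.integral_Ioc_eq_integral_Ioo]
      _ ≤ C₀ := hE
      _ ≤ max C₀ 0 := le_max_left _ _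
  -- the 1/(1-t²) integral
  have hB_eq : (∫ t in y..x, (1 - t^2)⁻¹) = Fat x - Fat y :=
    intervalIntegral.integral_eq_sub_of_hasDerivAt
      (fun t ht => by
        have := hsub (huic ▸ ht)
        exact Fat_hasDerivAt this.1 this.2) hint_B
  -- combine
  have h1 : |u x - u y| ≤ ∫ t in y..x, |deriv u t| := by
    rw [husub]
    exact intervalIntegral.abs_integral_le_integral_abs hyx
  have h2 : (∫ t in y..x, |deriv u t|)
      ≤ ∫ t in y..x, (1/2) * ((1 - t^2) * (deriv u t)^2 + (1 - t^2)⁻¹) :=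
    intervalIntegral.integral_mono_on hyx hint_f.abs
      (((hint_A.add hint_B).const_mul _)) hpt
  have h3 : (∫ t in y..x, (1/2) * ((1 - t^2) * (deriv u t)^2 + (1 - t^2)⁻¹))
      = (1/2) * ((∫ t in y..x, (1 - t^2) * (deriv u t)^2) + ∫ t in y..x, (1 - t^2)⁻¹) := by
    rw [intervalIntegral.integral_const_mul, intervalIntegral.integral_add hint_A hint_B]
  have h4 : Fat x - Fat y ≤ |Fat x| + |Fat y| := by
    have := abs_sub (Fat x) (Fat y)
    have h5 := le_abs_self (Fat x - Fat y)
    calc Fat x - Fat y ≤ |Fat x - Fat y| := h5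
      _ ≤ |Fat x| + |Fat y| := abs_sub _ _
  rw [h3, hB_eq] at h2
  linarith
end
lemma my_ae_Ioo {s : Set ℝ} (hs : MeasurableSet s) (hsub : s ⊆ Set.Icc (-1:ℝ) 1) :
    ∀ᵐ y ∂(MeasureTheory.volume.restrict s), y ∈ Set.Ioo (-1:ℝ) 1 := by
  have h1 : ∀ᵐ (y : ℝ), y ∉ ({-1, 1} : Set ℝ) :=
    MeasureTheory.measure_eq_zero_iff_ae_notMem.1
      ((Set.to_countable ({-1, 1} : Set ℝ)).measure_zero _)
  filter_upwards [MeasureTheory.ae_restrict_mem hs,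
    h1.filter_mono (MeasureTheory.ae_mono MeasureTheory.Measure.restrict_le_self)] with y hy h2
  have := hsub hy
  simp only [Set.mem_insert_iff, Set.mem_singleton_iff, not_or] at h2
  exact ⟨lt_of_le_of_ne this.1 (Ne.symm h2.1), lt_of_le_of_ne this.2 h2.2⟩

/-- Uniform weighted L^∞ bound from the weighted Dirichlet energy bound. -/
theorem weighted_Linfty_bound (β C₀ : ℝ) (hβ : 0 < β) :
    ∃ C₁ : ℝ, ∀ (u : ℝ → ℝ) (M : ℝ),
      ContDiffOn ℝ 1 u (Set.Icc (-1) 1) →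
      (∫ x in (-1:ℝ)..1, u x) = M →
      (∫ x in (-1:ℝ)..1, (1 - x^2) * (deriv u x)^2) ≤ C₀ →
      ∀ x ∈ Set.Ioo (-1:ℝ) 1, (1 - x^2) ^ (β/2) * |u x - M / 2| ≤ C₁ := by
  set γ := min (β/2) (1/2) with hγdef
  have hγ0 : 0 < γ := lt_min (by linarith) (by norm_num)
  have hγhalf : γ ≤ 1/2 := min_le_right _ _
  refine ⟨max C₀ 0 / 2 + γ⁻¹ + 2, ?_⟩
  intro u M hu hM hE x hx
  obtain ⟨hx1, hx2⟩ := hx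
  have hx0 : (0:ℝ) < 1 - x^2 := by nlinarith
  -- key inequality for all y in Ioo
  have key : ∀ y ∈ Set.Ioo (-1:ℝ) 1,
      |u x - u y| ≤ (max C₀ 0) / 2 + |Fat x| / 2 + |Fat y| / 2 := by
    intro y hy
    rcases le_total y x with h | h
    · exact my_key hu hE ⟨hx1, hx2⟩ hy h
    · have := my_key hu hE hy ⟨hx1, hx2⟩ h
      rw [abs_sub_comm] at this
      linarith
  -- integrabilities
  have hu_int : IntervalIntegrable u MeasureTheory.volume (-1) 1 := by
    apply ContinuousOn.intervalIntegrable
    rw [Set.uIcc_of_le (by norm_num : (-1:ℝ) ≤ 1)]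
    exact hu.continuousOn
  have habs_int : IntervalIntegrable (fun y => |u x - u y|) MeasureTheory.volume (-1) 1 := by
    apply ContinuousOn.intervalIntegrable
    rw [Set.uIcc_of_le (by norm_num : (-1:ℝ) ≤ 1)]
    exact (continuousOn_const.sub hu.continuousOn).abs
  -- integrability of the dominating function and of |Fat|
  have hg1 : IntervalIntegrable (fun y : ℝ => (1 - y) ^ (-(1/2) : ℝ))
      MeasureTheory.volume (-1) 1 := by
    have := (intervalIntegrable_rpow' (r := (-(1/2) : ℝ)) (by norm_num)
      (a := 0) (b := 2)).comp_sub_left 1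
    norm_num at this
    exact this.symm
  have hg2 : IntervalIntegrable (fun y : ℝ => (1 + y) ^ (-(1/2) : ℝ))
      MeasureTheory.volume (-1) 1 := by
    have := (intervalIntegrable_rpow' (r := (-(1/2) : ℝ)) (by norm_num)
      (a := 0) (b := 2)).comp_add_left 1
    norm_num at this
    exact this
  have hFatmeas : Measurable Fat := by
    unfold Fat
    exact ((Real.measurable_log.comp (measurable_const.add measurable_id)).sub
      (Real.measurable_log.comp (measurable_const.sub measurable_id))).div_const 2
  have hFat_ptbd : ∀ y ∈ Set.Ioo (-1:ℝ) 1,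
      |Fat y| ≤ (1 - y) ^ (-(1/2) : ℝ) + (1 + y) ^ (-(1/2) : ℝ) := by
    intro y hy
    have h := Fat_bound (by norm_num : (0:ℝ) < 1/2) le_rfl hy.1 hy.2
    norm_num at h ⊢
    try exact h
    try linarith
  have hFint : IntervalIntegrable (fun y => |Fat y|) MeasureTheory.volume (-1) 1 := by
    apply IntervalIntegrable.mono_fun' (hg1.add hg2)
    · exact (hFatmeas.abs).aestronglyMeasurable
    · have hIoc : Set.uIoc (-1:ℝ) 1 = Set.Ioc (-1:ℝ) 1 :=
        Set.uIoc_of_le (by norm_num)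
      rw [hIoc]
      filter_upwards [my_ae_Ioo measurableSet_Ioc Set.Ioc_subset_Icc_self] with y hy
      have := hFat_ptbd y hy
      simpa [abs_abs] using this
  -- step: |u x - M/2| ≤ (1/2) * ∫ |u x - u y|
  have e1 : (∫ y in (-1:ℝ)..1, (u x - u y)) = 2 * u x - M := by
    rw [intervalIntegral.integral_sub intervalIntegrable_const hu_int, hM,
      intervalIntegral.integral_const]
    norm_num
  have e2 : |u x - M/2| ≤ (1/2) * ∫ y in (-1:ℝ)..1, |u x - u y| := by
    have : u x - M/2 = (1/2) * ∫ y in (-1:ℝ)..1, (u x - u y) := by rw [e1]; ring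
    rw [this, abs_mul, abs_of_nonneg (by norm_num : (0:ℝ) ≤ 1/2)]
    gcongr
    exact intervalIntegral.abs_integral_le_integral_abs (by norm_num)
  -- step: ∫ |u x - u y| ≤ ∫ (c + |Fat y|/2)
  have e3 : (∫ y in (-1:ℝ)..1, |u x - u y|)
      ≤ ∫ y in (-1:ℝ)..1, ((max C₀ 0) / 2 + |Fat x| / 2 + |Fat y| / 2) := by
    apply intervalIntegral.integral_mono_ae_restrict (by norm_num) habs_int
    · exact intervalIntegrable_const.add (hFint.div_const 2)
    · filter_upwards [my_ae_Ioo measurableSet_Icc le_rfl] with y hy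
      exact key y hy
  have e4 : (∫ y in (-1:ℝ)..1, ((max C₀ 0) / 2 + |Fat x| / 2 + |Fat y| / 2))
      = 2 * ((max C₀ 0) / 2 + |Fat x| / 2) + (1/2) * ∫ y in (-1:ℝ)..1, |Fat y| := by
    rw [intervalIntegral.integral_add intervalIntegrable_const (hFint.div_const 2),
      intervalIntegral.integral_const]
    rw [intervalIntegral.integral_div]
    norm_num
    ring
  -- step: ∫ |Fat| ≤ 8
  have e5 : (∫ y in (-1:ℝ)..1, |Fat y|) ≤ 8 := by
    have comp1 : (∫ y in (-1:ℝ)..1, (1 - y) ^ (-(1/2) : ℝ))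
        = ∫ t in (0:ℝ)..2, t ^ (-(1/2) : ℝ) := by
      have := intervalIntegral.integral_comp_sub_left (a := (-1:ℝ)) (b := 1)
        (fun t : ℝ => t ^ (-(1/2) : ℝ)) 1
      norm_num at this ⊢
      exact this
    have comp2 : (∫ y in (-1:ℝ)..1, (1 + y) ^ (-(1/2) : ℝ))
        = ∫ t in (0:ℝ)..2, t ^ (-(1/2) : ℝ) := by
      have := intervalIntegral.integral_comp_add_left (a := (-1:ℝ)) (b := 1)
        (fun t : ℝ => t ^ (-(1/2) : ℝ)) 1
      norm_num at this ⊢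
      exact this
    have hval : (∫ t in (0:ℝ)..2, t ^ (-(1/2) : ℝ)) = 2 * 2 ^ ((1:ℝ)/2) := by
      rw [integral_rpow (Or.inl (by norm_num : (-1:ℝ) < -(1/2)))]
      norm_num
      ring
    have hsqrt : (2:ℝ) ^ ((1:ℝ)/2) ≤ 2 := by
      calc (2:ℝ) ^ ((1:ℝ)/2) ≤ 2 ^ (1:ℝ) :=
            Real.rpow_le_rpow_of_exponent_le one_le_two (by norm_num)
        _ = 2 := Real.rpow_one 2
    have mono : (∫ y in (-1:ℝ)..1, |Fat y|)
        ≤ ∫ y in (-1:ℝ)..1, ((1 - y) ^ (-(1/2) : ℝ) + (1 + y) ^ (-(1/2) : ℝ)) := by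
      apply intervalIntegral.integral_mono_ae_restrict (by norm_num) hFint (hg1.add hg2)
      filter_upwards [my_ae_Ioo measurableSet_Icc le_rfl] with y hy
      exact hFat_ptbd y hy
    rw [intervalIntegral.integral_add hg1 hg2, comp1, comp2, hval] at mono
    linarith
  -- weight bounds
  set w := (1 - x^2) ^ (β/2) with hwdef
  have hw0 : 0 ≤ w := Real.rpow_nonneg hx0.le _
  have hw1 : w ≤ 1 := Real.rpow_le_one hx0.le (by nlinarith) (by linarith)
  have hwF : w * |Fat x| ≤ 2 * γ⁻¹ := by
    have hwle : w ≤ (1 - x^2) ^ γ := by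
      apply Real.rpow_le_rpow_of_exponent_ge hx0 (by nlinarith)
      exact min_le_left _ _
    have ha : (0:ℝ) < 1 - x := by linarith
    have hb : (0:ℝ) < 1 + x := by linarith
    have hfac : (1 - x^2 : ℝ) = (1 - x) * (1 + x) := by ring
    have hmul : (1 - x^2) ^ γ = (1 - x) ^ γ * (1 + x) ^ γ := by
      rw [hfac, Real.mul_rpow ha.le hb.le]
    have hFb := Fat_bound hγ0 hγhalf hx1 hx2
    have hcancel1 : (1 - x) ^ γ * (1 - x) ^ (-γ) = 1 := by
      rw [← Real.rpow_add ha]; norm_num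
    have hcancel2 : (1 + x) ^ γ * (1 + x) ^ (-γ) = 1 := by
      rw [← Real.rpow_add hb]; norm_num
    have hpow1 : (1 - x) ^ γ ≤ 2 := by
      calc (1 - x) ^ γ ≤ 2 ^ γ := Real.rpow_le_rpow ha.le (by linarith) hγ0.le
        _ ≤ 2 ^ (1:ℝ) := Real.rpow_le_rpow_of_exponent_le one_le_two (by linarith)
        _ = 2 := Real.rpow_one 2
    have hpow2 : (1 + x) ^ γ ≤ 2 := by
      calc (1 + x) ^ γ ≤ 2 ^ γ := Real.rpow_le_rpow hb.le (by linarith) hγ0.le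
        _ ≤ 2 ^ (1:ℝ) := Real.rpow_le_rpow_of_exponent_le one_le_two (by linarith)
        _ = 2 := Real.rpow_one 2
    have hg0' : (0:ℝ) < γ⁻¹ := by positivity
    calc w * |Fat x| ≤ (1 - x^2) ^ γ * |Fat x| := by
          apply mul_le_mul_of_nonneg_right hwle (abs_nonneg _)
      _ ≤ (1 - x^2) ^ γ * (γ⁻¹ / 2 * ((1 - x) ^ (-γ) + (1 + x) ^ (-γ))) := by
          apply mul_le_mul_of_nonneg_left hFb (Real.rpow_nonneg hx0.le _)
      _ = γ⁻¹ / 2 * ((1 + x) ^ γ * ((1 - x) ^ γ * (1 - x) ^ (-γ))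
            + (1 - x) ^ γ * ((1 + x) ^ γ * (1 + x) ^ (-γ))) := by
          rw [hmul]; ring
      _ = γ⁻¹ / 2 * ((1 + x) ^ γ + (1 - x) ^ γ) := by
          rw [hcancel1, hcancel2]; ring
      _ ≤ γ⁻¹ / 2 * (2 + 2) := by
          apply mul_le_mul_of_nonneg_left (by linarith) (by positivity)
      _ = 2 * γ⁻¹ := by ring
  -- final combination
  have e6 : |u x - M/2| ≤ (max C₀ 0) / 2 + |Fat x| / 2 + 2 := by
    calc |u x - M/2| ≤ (1/2) * ∫ y in (-1:ℝ)..1, |u x - u y| := e2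
      _ ≤ (1/2) * (2 * ((max C₀ 0) / 2 + |Fat x| / 2) + (1/2) * ∫ y in (-1:ℝ)..1, |Fat y|) := by
          rw [← e4]; linarith
      _ ≤ (1/2) * (2 * ((max C₀ 0) / 2 + |Fat x| / 2) + (1/2) * 8) := by linarith
      _ = (max C₀ 0) / 2 + |Fat x| / 2 + 2 := by ring
  have hmax0 : (0:ℝ) ≤ max C₀ 0 := le_max_right _ _
  have habs0 : (0:ℝ) ≤ |u x - M/2| := abs_nonneg _
  calc w * |u x - M/2| ≤ w * ((max C₀ 0) / 2 + |Fat x| / 2 + 2) := by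
        apply mul_le_mul_of_nonneg_left e6 hw0
    _ = w * ((max C₀ 0) / 2) + (w * |Fat x|) / 2 + 2 * w := by ring
    _ ≤ 1 * ((max C₀ 0) / 2) + (2 * γ⁻¹) / 2 + 2 * 1 := by
        have h1 : w * ((max C₀ 0) / 2) ≤ 1 * ((max C₀ 0) / 2) := by
          apply mul_le_mul_of_nonneg_right hw1 (by linarith)
        have h2 : (w * |Fat x|) / 2 ≤ (2 * γ⁻¹) / 2 := by linarith
        have h3 : 2 * w ≤ 2 * 1 := by linarith
        linarith
    _ = max C₀ 0 / 2 + γ⁻¹ + 2 := by ring
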